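/- arXiv:2202.08530 — 7 statements merged into one kernel-verified Lean document; each statement's English description precedes it below -/
import Mathlib

section
/- Let n be sufficiently large and let H = (V, E) be a graph on at most n vertices with minimum degree δ(H) ≥ n/6. Let t ≤ n/√(ln n), and let A_1, …, A_t ⊆ V be subsets with |A_j| ≤ n·e^{-√(ln n)/3} for all 1 ≤ j ≤ t. Then there exists a set B ⊆ V with |B| ≤ 3.1·√(ln n) such that: (i) B dominates all but at most n·e^{-√(ln n)/3} vertices of V; (ii) B \ A_j ≠ ∅ for every j = 1, …, t; and (iii) the subgraph of H induced by B has at most six connected components. -/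
set_option maxHeartbeats 1000000
open Finset


lemma merge_step {V : Type} [Fintype V] [DecidableEq V] (H : SimpleGraph V) [DecidableRel H.Adj]
    (n : ℕ) (hn : 0 < n) (hcard : Fintype.card V ≤ n)
    (hdeg : (n : ℝ) / 6 ≤ (H.minDegree : ℝ))
    (B : Finset V) (hc7 : 7 ≤ Nat.card (H.induce (B : Set V)).ConnectedComponent) :
    ∃ u : V, 6 * Nat.card (H.induce ((insert u B : Finset V) : Set V)).ConnectedComponent ≤
      5 * Nat.card (H.induce (B : Set V)).ConnectedComponent + 6 := by
  classical
  set G := H.induce (B : Set V) with hG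
  have hne : Nonempty G.ConnectedComponent ∧ Finite G.ConnectedComponent := by
    rw [← Nat.card_ne_zero]; omega
  haveI := hne.1
  haveI : Fintype G.ConnectedComponent := Fintype.ofFinite _
  set c := Nat.card G.ConnectedComponent with hc
  have hcfin : c = Fintype.card G.ConnectedComponent := Nat.card_eq_fintype_card
  set rep : G.ConnectedComponent → V := fun K => (Quot.out K).val with hrep
  have hsum : ∑ u : V, ((univ.filter (fun K : G.ConnectedComponent => H.Adj u (rep K))).card)
      = ∑ K : G.ConnectedComponent, H.degree (rep K) := by
    simp only [Finset.card_filter]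
    rw [Finset.sum_comm]
    congr 1
    ext K
    rw [SimpleGraph.degree, SimpleGraph.neighborFinset_eq_filter, Finset.card_filter]
    congr 1; ext u
    simp [SimpleGraph.adj_comm]
  have hNpos : 0 < Fintype.card V :=
    Fintype.card_pos_iff.mpr ⟨(Quot.out (Classical.arbitrary G.ConnectedComponent) : _)⟩
  haveI : Nonempty V := Fintype.card_pos_iff.mp hNpos
  have hrepmk : ∀ K : G.ConnectedComponent, G.connectedComponentMk (Quot.out K) = K :=
    fun K => Quot.out_eq K
  have hlow : (c : ℝ) * ((n : ℝ) / 6)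
      ≤ ∑ u : V, ((univ.filter (fun K : G.ConnectedComponent => H.Adj u (rep K))).card : ℝ) := by
    have h2 : (c : ℝ) * (H.minDegree : ℝ) ≤ ∑ K : G.ConnectedComponent, (H.degree (rep K) : ℝ) := by
      have : ∀ K ∈ (univ : Finset G.ConnectedComponent),
          (H.minDegree : ℝ) ≤ (H.degree (rep K) : ℝ) := by
        intro K _; exact_mod_cast Nat.cast_le.mpr (H.minDegree_le_degree _)
      calc (c : ℝ) * (H.minDegree : ℝ)
          = ∑ _K : G.ConnectedComponent, (H.minDegree : ℝ) := by
            rw [Finset.sum_const, Finset.card_univ, ← hcfin, nsmul_eq_mul]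
        _ ≤ _ := Finset.sum_le_sum this
    calc (c : ℝ) * ((n : ℝ) / 6) ≤ (c : ℝ) * (H.minDegree : ℝ) :=
          mul_le_mul_of_nonneg_left hdeg (by positivity)
      _ ≤ ∑ K : G.ConnectedComponent, (H.degree (rep K) : ℝ) := h2
      _ = _ := by exact_mod_cast hsum.symm
  -- extract u with many adjacent components
  obtain ⟨u, -, hu⟩ := Finset.exists_le_of_sum_le (s := (univ : Finset V))
      (f := fun _ : V => (c : ℝ) * ((n : ℝ) / 6) / (Fintype.card V : ℝ))
      (g := fun u : V => ((univ.filter (fun K : G.ConnectedComponent => H.Adj u (rep K))).card : ℝ))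
      Finset.univ_nonempty (by
        rw [Finset.sum_const, Finset.card_univ, nsmul_eq_mul]
        rw [mul_div_cancel₀]
        · exact hlow
        · positivity)
  set D := univ.filter (fun K : G.ConnectedComponent => H.Adj u (rep K)) with hD
  set d := D.card with hd
  have hcd : c ≤ 6 * d := by
    have hNn : (Fintype.card V : ℝ) ≤ (n : ℝ) := by exact_mod_cast hcard
    have h1 : (c : ℝ) * ((n : ℝ) / 6) ≤ (Fintype.card V : ℝ) * d := by
      rw [div_le_iff₀ (by positivity)] at hu
      linarith [hu]
    have h2 : (c : ℝ) * ((n : ℝ) / 6) ≤ (n : ℝ) * d := by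
      calc (c : ℝ) * ((n : ℝ) / 6) ≤ (Fintype.card V : ℝ) * d := h1
        _ ≤ (n : ℝ) * d := by apply mul_le_mul_of_nonneg_right hNn (by positivity)
    have : (c : ℝ) ≤ 6 * d := by
      have hn' : (0 : ℝ) < n := by exact_mod_cast hn
      nlinarith
    exact_mod_cast this
  have hd2 : 2 ≤ d := by omega
  have hdc : d ≤ c := by
    calc d ≤ (univ : Finset G.ConnectedComponent).card := Finset.card_le_card (Finset.subset_univ _)
      _ = c := by rw [Finset.card_univ, hcfin]
  obtain ⟨K₀, hK₀⟩ : D.Nonempty := Finset.card_pos.mp (by omega)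
  -- build hom and component map
  refine ⟨u, ?_⟩
  set B' := insert u B with hB'
  set G' := H.induce ((B' : Finset V) : Set V) with hG'
  have hsub : ∀ x : V, x ∈ B → x ∈ B' := fun x hx => Finset.mem_insert_of_mem hx
  let hom : G →g G' := ⟨fun x => ⟨x.1, by
      simp only [hB', Finset.coe_insert, Set.mem_insert_iff]
      exact Or.inr x.2⟩, by
    intro a b hab
    exact hab⟩
  let f : G.ConnectedComponent → G'.ConnectedComponent := SimpleGraph.ConnectedComponent.map hom
  have humem : u ∈ (B' : Set V) := by simp [hB']
  set u' : ((B' : Finset V) : Set V) := ⟨u, humem⟩ with hu'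
  have claimD : ∀ K ∈ D, f K = G'.connectedComponentMk u' := by
    intro K hK
    rw [hD, Finset.mem_filter] at hK
    have h1 : f K = G'.connectedComponentMk (hom (Quot.out K)) := by
      conv_lhs => rw [← hrepmk K]
      exact SimpleGraph.ConnectedComponent.map_mk hom (Quot.out K)
    rw [h1]
    rw [SimpleGraph.ConnectedComponent.eq]
    apply SimpleGraph.Adj.reachable
    show G'.Adj _ u'
    have : H.Adj (rep K) u := (SimpleGraph.adj_comm _ _ _).mp hK.2
    exact this
  have hsurj : Function.Surjective f := by
    intro y
    induction y using SimpleGraph.ConnectedComponent.ind with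
    | _ w =>
      obtain ⟨v, hv⟩ := w
      have hv' : v = u ∨ v ∈ B := by simpa [hB'] using hv
      rcases hv' with rfl | hvB
      · exact ⟨K₀, by rw [claimD K₀ hK₀]⟩
      · exact ⟨G.connectedComponentMk ⟨v, by simpa using hvB⟩,
          SimpleGraph.ConnectedComponent.map_mk hom _⟩
  -- cardinality bound
  set T : Finset G.ConnectedComponent := insert K₀ (univ \ D) with hT
  have hsurjT : Function.Surjective (fun x : {x // x ∈ T} => f x.1) := by
    intro y
    obtain ⟨x, rfl⟩ := hsurj y
    by_cases hx : x ∈ D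
    · refine ⟨⟨K₀, Finset.mem_insert_self _ _⟩, ?_⟩
      simp only
      rw [claimD K₀ hK₀, claimD x hx]
    · exact ⟨⟨x, by simp [hT, hx]⟩, rfl⟩
  have hcard' : Nat.card G'.ConnectedComponent ≤ T.card := by
    calc Nat.card G'.ConnectedComponent ≤ Nat.card {x // x ∈ T} :=
          Nat.card_le_card_of_surjective _ hsurjT
      _ = T.card := by rw [Nat.card_eq_fintype_card, Fintype.card_coe]
  have hTcard : T.card ≤ c - d + 1 := by
    calc T.card ≤ (univ \ D).card + 1 := Finset.card_insert_le _ _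
      _ = c - d + 1 := by
          rw [Finset.card_sdiff_of_subset (Finset.subset_univ _), Finset.card_univ, ← hcfin]
  omega

lemma merge_iter {V : Type} [Fintype V] [DecidableEq V] (H : SimpleGraph V) [DecidableRel H.Adj]
    (n : ℕ) (hn : 0 < n) (hcard : Fintype.card V ≤ n)
    (hdeg : (n : ℝ) / 6 ≤ (H.minDegree : ℝ)) :
    ∀ (m : ℕ) (B : Finset V), ∃ B' : Finset V, B ⊆ B' ∧ B'.card ≤ B.card + m ∧
      (6:ℝ)^m * Nat.card (H.induce ((B' : Finset V) : Set V)).ConnectedComponent ≤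
        (5:ℝ)^m * Nat.card (H.induce ((B : Finset V) : Set V)).ConnectedComponent
          + 6*((6:ℝ)^m - (5:ℝ)^m) := by
  intro m
  induction m with
  | zero => intro B; exact ⟨B, Finset.Subset.refl _, by omega, by norm_num⟩
  | succ m ih =>
    intro B
    set c := Nat.card (H.induce ((B : Finset V) : Set V)).ConnectedComponent with hcdef
    by_cases hc : 7 ≤ c
    · obtain ⟨u, hu⟩ := merge_step H n hn hcard hdeg B hc
      obtain ⟨B', hsub, hcard', hineq⟩ := ih (insert u B)
      refine ⟨B', fun x hx => hsub (Finset.mem_insert_of_mem hx), ?_, ?_⟩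
      · calc B'.card ≤ (insert u B).card + m := hcard'
          _ ≤ B.card + 1 + m := by
            have := Finset.card_insert_le u B; omega
          _ = B.card + (m+1) := by omega
      · set c' := Nat.card (H.induce ((B' : Finset V) : Set V)).ConnectedComponent
        set c₁ := Nat.card (H.induce (((insert u B : Finset V)) : Set V)).ConnectedComponent
        have hu' : (6:ℝ) * c₁ ≤ 5 * c + 6 := by exact_mod_cast hu
        have h5 : (0:ℝ) < 5^m := by positivity
        have h6 : (0:ℝ) < 6^m := by positivity
        have hstep : (5:ℝ)^m * (6*c₁) ≤ (5:ℝ)^m * (5*c+6) :=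
          mul_le_mul_of_nonneg_left hu' (le_of_lt h5)
        rw [pow_succ, pow_succ]
        nlinarith [hineq]
    · obtain ⟨B', hsub, hcard', hineq⟩ := ih B
      refine ⟨B', hsub, by omega, ?_⟩
      set c' := Nat.card (H.induce ((B' : Finset V) : Set V)).ConnectedComponent
      have hc6 : (c : ℝ) ≤ 6 := by exact_mod_cast Nat.le_of_lt_succ (by omega)
      have h5 : (0:ℝ) < 5^m := by positivity
      rw [pow_succ, pow_succ]
      nlinarith [hineq, hc6]



lemma count_pi {V : Type} [Fintype V] [DecidableEq V] (k : ℕ) (S : Finset V) :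
    (univ.filter (fun ω : Fin k → V => ∀ i, ω i ∈ S)).card = S.card ^ k := by
  have : (univ.filter (fun ω : Fin k → V => ∀ i, ω i ∈ S)) = Fintype.piFinset (fun _ => S) := by
    ext ω; simp [Fintype.mem_piFinset]
  rw [this, Fintype.card_piFinset]
  simp



/-- The key lemma: in a graph `H` on at most `n` vertices with minimum degree at least
`n/6`, given at most `n/√(ln n)` sets `A_j`, each of size at most `n·e^{-√(ln n)/3}`,
there is a set `B` of at most `3.1·√(ln n)` vertices dominating all but at most
`n·e^{-√(ln n)/3}` vertices, meeting the complement of every `A_j`, and inducing a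
subgraph with at most six connected components. -/
theorem dominating_set_lemma :
    ∃ n₀ : ℕ, ∀ n : ℕ, n₀ ≤ n →
      ∀ (V : Type) [Fintype V] [Nonempty V] (H : SimpleGraph V)
        [DecidableRel H.Adj],
        Fintype.card V ≤ n →
        (n : ℝ) / 6 ≤ (H.minDegree : ℝ) →
        ∀ (t : ℕ), (t : ℝ) ≤ (n : ℝ) / Real.sqrt (Real.log n) →
        ∀ (A : Fin t → Set V),
          (∀ j, ((A j).ncard : ℝ) ≤ (n : ℝ) * Real.exp (-(Real.sqrt (Real.log n)) / 3)) →
          ∃ B : Finset V,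
            ((B.card : ℝ) ≤ 3.1 * Real.sqrt (Real.log n)) ∧
            (({v : V | ∀ b ∈ B, ¬ H.Adj v b}.ncard : ℝ) ≤
              (n : ℝ) * Real.exp (-(Real.sqrt (Real.log n)) / 3)) ∧
            (∀ j : Fin t, ((B : Set V) \ A j).Nonempty) ∧
            Nat.card (H.induce (B : Set V)).ConnectedComponent ≤ 6 := by
  classical
  refine ⟨⌈Real.exp (10^10)⌉₊, ?_⟩
  intro n hn V _ _ H _ hcard hdeg t ht A hA
  set L := Real.log (n:ℝ) with hL
  set s := Real.sqrt L with hs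
  set ε := Real.exp (-s / 3) with hε
  -- basic numeric facts
  have hnR : Real.exp (10^10) ≤ (n:ℝ) := by
    have h := Nat.ceil_le.mp hn
    exact_mod_cast h
  have hn1 : (1:ℝ) ≤ (n:ℝ) := le_trans (Real.one_le_exp (by positivity)) hnR
  have hnpos : (0:ℝ) < n := by linarith
  have hnpos' : 0 < n := by exact_mod_cast hnpos
  have hLbig : (10:ℝ)^10 ≤ L := by
    rw [hL, Real.le_log_iff_exp_le hnpos]; exact hnR
  have hL0 : (0:ℝ) ≤ L := by norm_num at hLbig ⊢; linarith
  have hsbig : (10:ℝ)^5 ≤ s := by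
    rw [hs, Real.le_sqrt (by norm_num) hL0]
    norm_num at hLbig ⊢; linarith
  have hs0 : (0:ℝ) < s := lt_of_lt_of_le (by norm_num) hsbig
  have hsqL : s^2 = L := Real.sq_sqrt hL0
  have hε0 : (0:ℝ) < ε := Real.exp_pos _
  set k := ⌈3*s⌉₊ + 20 with hk
  have hk3s : 3*s + 20 ≤ (k:ℝ) := by
    have := Nat.le_ceil (3*s)
    push_cast [hk]; linarith
  have hkle : (k:ℝ) ≤ 3*s + 21 := by
    have := Nat.ceil_lt_add_one (show (0:ℝ) ≤ 3*s by positivity)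
    push_cast [hk]; linarith
  set N := Fintype.card V with hN
  have hNn : N ≤ n := hcard
  have hNnR : (N:ℝ) ≤ (n:ℝ) := by exact_mod_cast hNn
  have hNpos : 0 < N := Fintype.card_pos
  have hNposR : (0:ℝ) < N := by exact_mod_cast hNpos
  obtain ⟨v₀⟩ := ‹Nonempty V›
  have hminlt : (H.minDegree : ℝ) < N := by
    exact_mod_cast lt_of_le_of_lt (H.minDegree_le_degree v₀) (H.degree_lt_card_verts v₀)
  have hn6N : (n:ℝ) ≤ 6*(N:ℝ) := by linarith
  -- counting quantities
  set count1 : (Fin k → V) → ℕ :=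
    fun ω => (univ.filter (fun v => ∀ i, ¬ H.Adj v (ω i))).card with hcount1
  set count2 : (Fin k → V) → ℕ :=
    fun ω => (univ.filter (fun j : Fin t => ∀ i, ω i ∈ A j)).card with hcount2
  -- swap sums for count1
  have hswap1 : ∑ ω : Fin k → V, (count1 ω : ℝ)
      = ∑ v : V, (((univ.filter (fun u => ¬ H.Adj v u)).card : ℝ))^k := by
    have h1 : ∀ v : V, (univ.filter (fun ω : Fin k → V => ∀ i, ¬ H.Adj v (ω i)))
        = (univ.filter (fun ω : Fin k → V => ∀ i, ω i ∈ univ.filter (fun u => ¬ H.Adj v u))) := by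
      intro v; apply Finset.filter_congr; intro ω _; simp
    have h2 : ∑ ω : Fin k → V, (count1 ω) = ∑ v : V, ((univ.filter (fun u => ¬ H.Adj v u)).card)^k := by
      simp only [hcount1, Finset.card_filter]
      rw [Finset.sum_comm]
      congr 1
      ext v
      rw [← Finset.card_filter, h1 v, count_pi, Finset.card_filter]
    exact_mod_cast h2
  have hswap2 : ∑ ω : Fin k → V, (count2 ω : ℝ)
      = ∑ j : Fin t, (((univ.filter (fun u => u ∈ A j)).card : ℝ))^k := by
    have h1 : ∀ j : Fin t, (univ.filter (fun ω : Fin k → V => ∀ i, ω i ∈ A j))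
        = (univ.filter (fun ω : Fin k → V => ∀ i, ω i ∈ univ.filter (fun u => u ∈ A j))) := by
      intro j; apply Finset.filter_congr; intro ω _; simp
    have h2 : ∑ ω : Fin k → V, (count2 ω) = ∑ j : Fin t, ((univ.filter (fun u => u ∈ A j)).card)^k := by
      simp only [hcount2, Finset.card_filter]
      rw [Finset.sum_comm]
      congr 1
      ext j
      rw [← Finset.card_filter, h1 j, count_pi, Finset.card_filter]
    exact_mod_cast h2
  -- per-v bound
  have hnonnbr : ∀ v : V, ((univ.filter (fun u => ¬ H.Adj v u)).card : ℝ) ≤ (5/6) * N := by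
    intro v
    have hdegv : (univ.filter (fun u => H.Adj v u)).card = H.degree v := by
      rw [SimpleGraph.degree, SimpleGraph.neighborFinset_eq_filter]
    have hsplit := Finset.card_filter_add_card_filter_not
      (s := (univ : Finset V)) (p := fun u => H.Adj v u)
    rw [Finset.card_univ, ← hN, hdegv] at hsplit
    have hdv : (n:ℝ)/6 ≤ (H.degree v : ℝ) := le_trans hdeg (by exact_mod_cast H.minDegree_le_degree v)
    have : ((univ.filter (fun u => ¬ H.Adj v u)).card : ℝ) = (N:ℝ) - (H.degree v : ℝ) := by
      have : (H.degree v) + (univ.filter (fun u => ¬ H.Adj v u)).card = N := hsplit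
      push_cast [← this]; ring
    rw [this]
    have : (N:ℝ)/6 ≤ (n:ℝ)/6 := by linarith
    linarith
  -- per-j bound
  have hAj : ∀ j : Fin t, ((univ.filter (fun u => u ∈ A j)).card : ℝ) ≤ ε * n := by
    intro j
    have hco : ((univ.filter (fun u => u ∈ A j)) : Set V) = A j := by
      rw [Finset.coe_filter]; simp
    have : ((univ.filter (fun u => u ∈ A j)).card : ℝ) = ((A j).ncard : ℝ) := by
      rw [← Set.ncard_coe_finset, hco]
    rw [this]
    calc ((A j).ncard : ℝ) ≤ (n:ℝ) * ε := hA j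
      _ = ε * n := by ring
  -- key inequality (a)
  have h56exp : (5/6 : ℝ) ≤ Real.exp (-(1/6)) := by
    have := Real.add_one_le_exp (-(1/6:ℝ)); linarith
  have hlog2 : Real.log 2 ≤ 1 := by
    have := Real.log_two_lt_d9; linarith
  have hIa : (N:ℝ) * ((5/6:ℝ))^k ≤ ε * n / 2 := by
    have h1 : ((5/6:ℝ))^k ≤ Real.exp (-(1/6))^k :=
      pow_le_pow_left₀ (by norm_num) h56exp k
    have h2 : Real.exp (-(1/6:ℝ))^k = Real.exp (-(k:ℝ)/6) := by
      rw [← Real.exp_nat_mul]; congr 1; ring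
    have h3 : Real.exp (-(k:ℝ)/6) ≤ Real.exp (-s/3 - Real.log 2) := by
      apply Real.exp_le_exp.mpr
      have : s/6 ≥ Real.log 2 := by
        calc Real.log 2 ≤ 1 := hlog2
          _ ≤ s/6 := by linarith
      linarith [hk3s]
    have h4 : Real.exp (-s/3 - Real.log 2) = ε / 2 := by
      rw [Real.exp_sub, Real.exp_log (by norm_num), hε]
    have h5 : ((5/6:ℝ))^k ≤ ε/2 := by
      calc ((5/6:ℝ))^k ≤ Real.exp (-(1/6))^k := h1
        _ = Real.exp (-(k:ℝ)/6) := h2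
        _ ≤ Real.exp (-s/3 - Real.log 2) := h3
        _ = ε/2 := h4
    calc (N:ℝ) * ((5/6:ℝ))^k ≤ (n:ℝ) * (ε/2) := by
          apply mul_le_mul hNnR h5 (by positivity) (by positivity)
      _ = ε * n / 2 := by ring
  -- key inequality (b)
  have hlog6 : Real.log 6 ≤ 2 := by
    rw [Real.log_le_iff_le_exp (by norm_num)]
    have h := Real.exp_one_gt_d9
    calc (6:ℝ) ≤ 2.7182818283^2 := by norm_num
      _ ≤ (Real.exp 1)^2 := by nlinarith
      _ = Real.exp 2 := by rw [← Real.exp_nat_mul]; norm_num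
  have hIb : (t:ℝ) * ((6:ℝ)*ε)^k < 1/2 := by
    have htn : (t:ℝ) ≤ (n:ℝ) := by
      calc (t:ℝ) ≤ (n:ℝ)/s := ht
        _ ≤ n := div_le_self (by positivity) (by linarith)
    have h6ε : (6:ℝ)*ε = Real.exp (Real.log 6 - s/3) := by
      rw [Real.exp_sub, Real.exp_log (by norm_num), hε, eq_div_iff (Real.exp_pos _).ne',
        mul_assoc, ← Real.exp_add, show -s/3 + s/3 = 0 by ring, Real.exp_zero, mul_one]
    have h1 : ((6:ℝ)*ε)^k = Real.exp ((k:ℝ) * (Real.log 6 - s/3)) := by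
      rw [h6ε, ← Real.exp_nat_mul]
    have hklog6 : (k:ℝ) * Real.log 6 ≤ 6*s + 42 := by
      have hl60 : (0:ℝ) ≤ Real.log 6 := Real.log_nonneg (by norm_num)
      calc (k:ℝ) * Real.log 6 ≤ (3*s+21) * 2 := by
            apply mul_le_mul hkle hlog6 hl60 (by positivity)
        _ = 6*s + 42 := by ring
    have hks3 : L + 20*s/3 ≤ (k:ℝ)*s/3 := by
      nlinarith [mul_le_mul_of_nonneg_right hk3s hs0.le, hsqL]
    have h2 : (k:ℝ) * (Real.log 6 - s/3) ≤ -L + 42 - 2*s/3 := by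
      have : (k:ℝ) * (Real.log 6 - s/3) = (k:ℝ)*Real.log 6 - (k:ℝ)*s/3 := by ring
      rw [this]; linarith
    have h3 : (t:ℝ) * ((6:ℝ)*ε)^k ≤ (n:ℝ) * Real.exp (-L + 42 - 2*s/3) := by
      rw [h1]
      apply mul_le_mul htn (Real.exp_le_exp.mpr h2) (by positivity) (by positivity)
    have h4 : (n:ℝ) * Real.exp (-L + 42 - 2*s/3) = Real.exp (42 - 2*s/3) := by
      rw [show (-L + 42 - 2*s/3) = (42 - 2*s/3) + (-L) by ring, Real.exp_add]
      rw [Real.exp_neg, hL, Real.exp_log hnpos]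
      field_simp
    have h5 : Real.exp (42 - 2*s/3) < 1/2 := by
      have : (42:ℝ) - 2*s/3 ≤ -1 := by linarith
      calc Real.exp (42 - 2*s/3) ≤ Real.exp (-1) := Real.exp_le_exp.mpr this
        _ < 1/2 := by
          rw [Real.exp_neg]
          have := Real.exp_one_gt_d9
          rw [inv_lt_comm₀ (by positivity) (by norm_num)]
          linarith
    have h3' : (t:ℝ) * ((6:ℝ)*ε)^k ≤ Real.exp (42 - 2*s/3) := by rw [← h4]; exact h3
    linarith
  -- total sum comparison
  have hΩcard : Fintype.card (Fin k → V) = N^k := by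
    rw [Fintype.card_fun, Fintype.card_fin, hN]
  have hNk : (0:ℝ) < (N:ℝ)^k := by positivity
  have hεnpos : (0:ℝ) < ε * n := by positivity
  have hsum1 : ∑ ω : Fin k → V, (count1 ω : ℝ) ≤ ε*(n:ℝ)/2 * (N:ℝ)^k := by
    rw [hswap1]
    calc ∑ v : V, (((univ.filter (fun u => ¬ H.Adj v u)).card : ℝ))^k
        ≤ ∑ _v : V, ((5/6)*(N:ℝ))^k := by
          apply Finset.sum_le_sum; intro v _
          exact pow_le_pow_left₀ (Nat.cast_nonneg _) (hnonnbr v) k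
      _ = (N:ℝ) * ((5/6)*(N:ℝ))^k := by
          rw [Finset.sum_const, Finset.card_univ, ← hN, nsmul_eq_mul]
      _ = ((N:ℝ) * (5/6)^k) * (N:ℝ)^k := by rw [mul_pow]; ring
      _ ≤ (ε*(n:ℝ)/2) * (N:ℝ)^k := by
          apply mul_le_mul_of_nonneg_right ?_ (le_of_lt hNk)
          calc (N:ℝ)*(5/6:ℝ)^k ≤ ε * n/2 := hIa
            _ = ε*(n:ℝ)/2 := by ring
  have hsum2 : ∑ ω : Fin k → V, (count2 ω : ℝ) < 1/2 * (N:ℝ)^k := by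
    rw [hswap2]
    calc ∑ j : Fin t, (((univ.filter (fun u => u ∈ A j)).card : ℝ))^k
        ≤ ∑ _j : Fin t, (ε*(n:ℝ))^k := by
          apply Finset.sum_le_sum; intro j _
          exact pow_le_pow_left₀ (Nat.cast_nonneg _) (hAj j) k
      _ = (t:ℝ) * (ε*(n:ℝ))^k := by
          rw [Finset.sum_const, Finset.card_univ, Fintype.card_fin, nsmul_eq_mul]
      _ ≤ (t:ℝ) * (((6:ℝ)*ε)^k * (N:ℝ)^k) := by
          apply mul_le_mul_of_nonneg_left ?_ (by positivity)
          rw [← mul_pow]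
          apply pow_le_pow_left₀ (by positivity)
          calc ε*(n:ℝ) ≤ ε*(6*(N:ℝ)) := by
                apply mul_le_mul_of_nonneg_left hn6N (le_of_lt hε0)
            _ = 6*ε*(N:ℝ) := by ring
      _ = ((t:ℝ)*((6:ℝ)*ε)^k) * (N:ℝ)^k := by ring
      _ < 1/2 * (N:ℝ)^k := mul_lt_mul_of_pos_right hIb hNk
  have htotal : ∑ ω : Fin k → V, ((count1 ω : ℝ) + (ε*(n:ℝ)) * (count2 ω))
      < ∑ _ω : Fin k → V, (ε*(n:ℝ)) := by
    rw [Finset.sum_add_distrib, ← Finset.mul_sum, Finset.sum_const, Finset.card_univ,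
      hΩcard, nsmul_eq_mul]
    have h2 : (ε*(n:ℝ)) * (∑ ω : Fin k → V, (count2 ω : ℝ)) < (ε*(n:ℝ)) * (1/2 * (N:ℝ)^k) :=
      mul_lt_mul_of_pos_left hsum2 hεnpos
    have h3 : ((N^k : ℕ) : ℝ) = (N:ℝ)^k := by push_cast; rfl
    rw [h3]
    nlinarith [hsum1]
  obtain ⟨ω, -, hω⟩ := Finset.exists_lt_of_sum_lt htotal
  have hc2 : count2 ω = 0 := by
    by_contra hne
    have h1 : (1:ℝ) ≤ (count2 ω : ℝ) := by exact_mod_cast Nat.one_le_iff_ne_zero.mpr hne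
    have h0 : (0:ℝ) ≤ (count1 ω : ℝ) := Nat.cast_nonneg _
    have h2 : ε*(n:ℝ)*1 ≤ ε*(n:ℝ)*(count2 ω : ℝ) :=
      mul_le_mul_of_nonneg_left h1 (le_of_lt hεnpos)
    linarith
  have hc1 : (count1 ω : ℝ) < ε * n := by
    rw [hc2] at hω; push_cast at hω; linarith
  -- define B₀ and merge components
  set B₀ := Finset.image ω univ with hB₀
  have hB₀card : B₀.card ≤ k := le_trans Finset.card_image_le (by simp)
  have hc₀k : Nat.card (H.induce ((B₀ : Finset V) : Set V)).ConnectedComponent ≤ k := by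
    have hsur : Function.Surjective
        ((H.induce ((B₀ : Finset V) : Set V)).connectedComponentMk) := fun y => Quot.exists_rep y
    calc Nat.card (H.induce ((B₀ : Finset V) : Set V)).ConnectedComponent
        ≤ Nat.card ((B₀ : Finset V) : Set V) := Nat.card_le_card_of_surjective _ hsur
      _ = B₀.card := by rw [Nat.card_coe_set_eq, Set.ncard_coe_finset]
      _ ≤ k := hB₀card
  set m := ⌈s/20⌉₊ with hm
  have hm20 : s/20 ≤ (m:ℝ) := Nat.le_ceil _
  have hmle : (m:ℝ) ≤ s/20 + 1 := by
    have := Nat.ceil_lt_add_one (show (0:ℝ) ≤ s/20 by positivity)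
    linarith
  obtain ⟨B', hsub, hcard', hineq⟩ := merge_iter H n hnpos' hcard hdeg m B₀
  -- component count of B' at most 6
  have h5m : (0:ℝ) < (5:ℝ)^m := by positivity
  have h6m : (0:ℝ) < (6:ℝ)^m := by positivity
  have hk5m : (k:ℝ) * (5:ℝ)^m ≤ (6:ℝ)^m := by
    have hexp16 : Real.exp (1/6) ≤ 6/5 := by
      rw [show (1/6:ℝ) = -(-(1/6)) by ring, Real.exp_neg]
      rw [inv_le_comm₀ (Real.exp_pos _) (by norm_num)]
      calc (6/5:ℝ)⁻¹ = 5/6 := by norm_num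
        _ ≤ Real.exp (-(1/6)) := h56exp
    have h1 : Real.exp ((m:ℝ)/6) ≤ (6/5:ℝ)^m := by
      calc Real.exp ((m:ℝ)/6) = Real.exp (1/6)^m := by
            rw [← Real.exp_nat_mul]; congr 1; ring
        _ ≤ (6/5:ℝ)^m := pow_le_pow_left₀ (by positivity) hexp16 m
    have h2 : Real.exp (s/120) ≤ Real.exp ((m:ℝ)/6) := by
      apply Real.exp_le_exp.mpr; linarith
    have h3 : (s/360)^3 ≤ Real.exp (s/120) := by
      calc (s/360:ℝ)^3 ≤ (s/360 + 1)^3 := by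
            apply pow_le_pow_left₀ (by positivity); linarith
        _ ≤ (Real.exp (s/360))^3 := by
            apply pow_le_pow_left₀ (by positivity)
            have := Real.add_one_le_exp (s/360); linarith
        _ = Real.exp (s/120) := by
            rw [← Real.exp_nat_mul]; congr 1; push_cast; ring
    have h4 : (k:ℝ) ≤ (s/360)^3 := by
      have hk4s : (k:ℝ) ≤ 4*s := by linarith
      have e1 : (s/360:ℝ)^3 = s*L/46656000 := by rw [← hsqL]; ring
      have hsL : s * (10:ℝ)^10 ≤ s * L := mul_le_mul_of_nonneg_left hLbig (le_of_lt hs0)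
      rw [e1]
      norm_num at hsL ⊢
      linarith
    have h5 : (k:ℝ) ≤ (6/5:ℝ)^m := by linarith
    calc (k:ℝ) * (5:ℝ)^m ≤ (6/5:ℝ)^m * (5:ℝ)^m := by
          apply mul_le_mul_of_nonneg_right h5 (le_of_lt h5m)
      _ = (6:ℝ)^m := by rw [← mul_pow]; norm_num
  have hc'6 : Nat.card (H.induce ((B' : Finset V) : Set V)).ConnectedComponent ≤ 6 := by
    set c' := Nat.card (H.induce ((B' : Finset V) : Set V)).ConnectedComponent
    set c₀ := Nat.card (H.induce ((B₀ : Finset V) : Set V)).ConnectedComponent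
    have hc₀R : (c₀:ℝ) ≤ (k:ℝ) := by exact_mod_cast hc₀k
    have h1 : (5:ℝ)^m * c₀ ≤ (6:ℝ)^m := by
      calc (5:ℝ)^m * c₀ ≤ (5:ℝ)^m * k := by
            apply mul_le_mul_of_nonneg_left hc₀R (le_of_lt h5m)
        _ = (k:ℝ) * (5:ℝ)^m := by ring
        _ ≤ (6:ℝ)^m := hk5m
    have h2 : (6:ℝ)^m * c' < 7 * (6:ℝ)^m := by
      calc (6:ℝ)^m * c' ≤ (5:ℝ)^m * c₀ + 6*((6:ℝ)^m - (5:ℝ)^m) := hineq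
        _ ≤ (6:ℝ)^m + 6*(6:ℝ)^m - 6*(5:ℝ)^m := by linarith
        _ < 7 * (6:ℝ)^m := by linarith [h5m]
    have h3 : (c' : ℝ) < 7 := by
      by_contra hcon
      push_neg at hcon
      have h4 : (6:ℝ)^m * 7 ≤ (6:ℝ)^m * c' :=
        mul_le_mul_of_nonneg_left hcon (le_of_lt h6m)
      linarith
    have : c' < 7 := by exact_mod_cast h3
    omega
  refine ⟨B', ?_, ?_, ?_, hc'6⟩
  · -- size bound
    have h1 : (B'.card : ℝ) ≤ (k:ℝ) + (m:ℝ) := by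
      have : B'.card ≤ k + m := le_trans hcard' (by omega)
      exact_mod_cast this
    calc (B'.card : ℝ) ≤ (k:ℝ) + (m:ℝ) := h1
      _ ≤ (3*s+21) + (s/20+1) := by linarith
      _ ≤ 3.1 * s := by linarith
  · -- domination
    have hss : {v : V | ∀ b ∈ B', ¬ H.Adj v b}
        ⊆ ((univ.filter (fun v => ∀ i, ¬ H.Adj v (ω i)) : Finset V) : Set V) := by
      intro v hv
      simp only [Set.mem_setOf_eq] at hv
      simp only [Finset.coe_filter, Set.mem_setOf_eq, Finset.mem_univ, true_and]
      intro i
      exact hv (ω i) (hsub (Finset.mem_image_of_mem ω (Finset.mem_univ i)))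
    calc ({v : V | ∀ b ∈ B', ¬ H.Adj v b}.ncard : ℝ)
        ≤ (((univ.filter (fun v => ∀ i, ¬ H.Adj v (ω i)) : Finset V) : Set V).ncard : ℝ) := by
          exact_mod_cast Set.ncard_le_ncard hss (Finset.finite_toSet _)
      _ = (count1 ω : ℝ) := by rw [Set.ncard_coe_finset]
      _ ≤ ε * n := le_of_lt hc1
      _ = (n:ℝ) * ε := by ring
  · -- hitting
    intro j
    have hempty : (univ.filter (fun j : Fin t => ∀ i, ω i ∈ A j)) = ∅ :=
      Finset.card_eq_zero.mp hc2
    have : ¬ (∀ i, ω i ∈ A j) := by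
      intro hall
      have hj : j ∈ (univ.filter (fun j : Fin t => ∀ i, ω i ∈ A j)) :=
        Finset.mem_filter.mpr ⟨Finset.mem_univ _, hall⟩
      rw [hempty] at hj
      exact absurd hj (Finset.notMem_empty j)
    push_neg at this
    obtain ⟨i, hi⟩ := this
    exact ⟨ω i, Set.mem_diff_of_mem
      (Finset.mem_coe.mpr (hsub (Finset.mem_image_of_mem ω (Finset.mem_univ i)))) hi⟩
end

section
/- Let n be sufficiently large and let H = (V, E) be a graph on at most n vertices with minimum degree δ(H) ≥ n/6. Then there exists a set B ⊆ V with |B| ≤ 3.1·√(ln n) that dominates all but at most n·e^{-√(ln n)/3} vertices of V. -/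
open Finset

lemma exists_good_vertex {V : Type} [Fintype V] [Nonempty V] (H : SimpleGraph V)
    [DecidableRel H.Adj] (U : Finset V) :
    ∃ b : V, U.card * H.minDegree ≤ (U.filter (fun u => H.Adj u b)).card * Fintype.card V := by
  obtain ⟨b, -, hb⟩ := Finset.exists_max_image Finset.univ
    (fun v => (U.filter (fun u => H.Adj u v)).card) Finset.univ_nonempty
  refine ⟨b, ?_⟩
  have hsum : ∑ u ∈ U, H.degree u = ∑ v : V, (U.filter (fun u => H.Adj u v)).card := by
    simp only [Finset.card_filter]
    rw [Finset.sum_comm]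
    refine Finset.sum_congr rfl fun u _ => ?_
    rw [← Finset.card_filter]
    rw [SimpleGraph.degree, SimpleGraph.neighborFinset_eq_filter]
  calc U.card * H.minDegree ≤ ∑ u ∈ U, H.degree u := by
        rw [← Finset.sum_const_nat (m := H.minDegree) (fun x _ => rfl)]
        exact Finset.sum_le_sum fun u _ => H.minDegree_le_degree u
    _ = ∑ v : V, (U.filter (fun u => H.Adj u v)).card := hsum
    _ ≤ ∑ _v : V, (U.filter (fun u => H.Adj u b)).card :=
        Finset.sum_le_sum fun v _ => hb v (Finset.mem_univ v)
    _ = (U.filter (fun u => H.Adj u b)).card * Fintype.card V := by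
        rw [Finset.sum_const, Finset.card_univ, smul_eq_mul, mul_comm]

lemma greedy {V : Type} [Fintype V] [Nonempty V] (H : SimpleGraph V) [DecidableRel H.Adj]
    (hδ : (Fintype.card V : ℝ) ≤ 6 * H.minDegree) (k : ℕ) :
    ∃ B : Finset V, B.card ≤ k ∧
      ((Finset.univ.filter (fun v => ∀ b ∈ B, ¬ H.Adj v b)).card : ℝ)
        ≤ (5/6)^k * Fintype.card V := by
  induction k with
  | zero =>
    refine ⟨∅, le_refl _, ?_⟩
    simp only [pow_zero, one_mul]
    exact_mod_cast Finset.card_filter_le _ _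
  | succ k ih =>
    classical
    obtain ⟨B, hBcard, hBdom⟩ := ih
    obtain ⟨U, hUdef, hBdom⟩ : ∃ U : Finset V, (∀ v, v ∈ U ↔ ∀ b ∈ B, ¬ H.Adj v b) ∧
        ((U.card : ℝ) ≤ (5/6)^k * Fintype.card V) :=
      ⟨_, fun v => by simp, hBdom⟩
    obtain ⟨b, hb⟩ := exists_good_vertex H U
    set F := U.filter (fun u => H.Adj u b) with hF
    refine ⟨insert b B, (Finset.card_insert_le _ _).trans (Nat.succ_le_succ hBcard), ?_⟩
    have key : ((U \ F).card : ℝ) ≤ (5/6)^(k+1) * Fintype.card V := by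
      have hcardV : (0:ℝ) < Fintype.card V := by positivity
      have hFU : F ⊆ U := Finset.filter_subset _ _
      have hcard : ((U \ F).card : ℝ) = (U.card : ℝ) - F.card := by
        rw [Finset.card_sdiff_of_subset hFU, Nat.cast_sub (Finset.card_le_card hFU)]
      have hF6 : (U.card : ℝ) / 6 ≤ F.card := by
        have h1 : (U.card : ℝ) * H.minDegree ≤ F.card * Fintype.card V := by exact_mod_cast hb
        have h2 : (U.card : ℝ) * Fintype.card V ≤ 6 * F.card * Fintype.card V := by
          calc (U.card : ℝ) * Fintype.card V ≤ (U.card : ℝ) * (6 * H.minDegree) :=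
                mul_le_mul_of_nonneg_left hδ (Nat.cast_nonneg _)
            _ = 6 * ((U.card : ℝ) * H.minDegree) := by ring
            _ ≤ 6 * (F.card * Fintype.card V) := by linarith
            _ = 6 * F.card * Fintype.card V := by ring
        have h3 : (U.card : ℝ) ≤ 6 * F.card := le_of_mul_le_mul_right h2 hcardV
        linarith
      calc ((U \ F).card : ℝ) = (U.card : ℝ) - F.card := hcard
        _ ≤ (5/6) * U.card := by linarith
        _ ≤ (5/6) * ((5/6)^k * Fintype.card V) := by linarith
        _ = (5/6)^(k+1) * Fintype.card V := by ring
    refine le_trans ?_ key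
    refine Nat.cast_le.mpr (Finset.card_le_card ?_)
    intro v hv
    simp only [Finset.mem_filter, Finset.mem_univ, true_and, Finset.mem_insert] at hv
    simp only [hF, Finset.mem_sdiff, Finset.mem_filter, hUdef]
    exact ⟨fun c hc => hv c (Or.inr hc),
      fun h => (hv b (Or.inl rfl)) h.2⟩

/-- In a graph `H` on at most `n` vertices (`n` sufficiently large) with minimum degree
at least `n/6`, there is a set `B` of at most `3.1·√(ln n)` vertices which dominates all
but at most `n·e^{-√(ln n)/3}` vertices. -/
theorem small_dominating_set :
    ∃ n₀ : ℕ, ∀ n : ℕ, n₀ ≤ n →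
      ∀ (V : Type) [Fintype V] [Nonempty V] (H : SimpleGraph V)
        [DecidableRel H.Adj],
        Fintype.card V ≤ n →
        (n : ℝ) / 6 ≤ (H.minDegree : ℝ) →
        ∃ B : Finset V,
          ((B.card : ℝ) ≤ 3.1 * Real.sqrt (Real.log n)) ∧
          (({v : V | ∀ b ∈ B, ¬ H.Adj v b}.ncard : ℝ) ≤
            (n : ℝ) * Real.exp (-(Real.sqrt (Real.log n)) / 3)) := by
  refine ⟨10, fun n hn V _ _ H _ hcard hδ => ?_⟩
  classical
  have hn10 : (10:ℝ) ≤ n := by exact_mod_cast hn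
  have hn1 : (1:ℝ) ≤ Real.log n := by
    rw [Real.le_log_iff_exp_le (by linarith)]
    have := Real.exp_one_lt_d9
    linarith
  set s := Real.sqrt (Real.log n) with hs
  have hs1 : 1 ≤ s := by
    rw [hs, show (1:ℝ) = Real.sqrt 1 by rw [Real.sqrt_one]]
    exact Real.sqrt_le_sqrt hn1
  have hlog65 : (1:ℝ)/6 ≤ Real.log (6/5) := by
    have h := Real.log_le_sub_one_of_pos (show (0:ℝ) < 5/6 by norm_num)
    have h2 : Real.log (6/5 : ℝ) = - Real.log (5/6 : ℝ) := by
      rw [show (6/5 : ℝ) = (5/6 : ℝ)⁻¹ by norm_num, Real.log_inv]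
    rw [h2]; linarith
  have hδ' : (Fintype.card V : ℝ) ≤ 6 * H.minDegree := by
    have h1 : (Fintype.card V : ℝ) ≤ n := Nat.cast_le.mpr hcard
    linarith
  set k := ⌈2 * s⌉₊ with hk
  obtain ⟨B, hBk, hBdom⟩ := greedy H hδ' k
  refine ⟨B, ?_, ?_⟩
  · have h1 : (k:ℝ) < 2*s + 1 := Nat.ceil_lt_add_one (by positivity)
    calc (B.card:ℝ) ≤ k := Nat.cast_le.mpr hBk
      _ ≤ 2*s+1 := le_of_lt h1
      _ ≤ 3.1*s := by nlinarith
  · have hset : {v : V | ∀ b ∈ B, ¬ H.Adj v b}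
        = ↑(Finset.univ.filter (fun v => ∀ b ∈ B, ¬ H.Adj v b)) := by
      ext v; simp
    rw [hset, Set.ncard_coe_finset]
    have hpow : ((5:ℝ)/6)^k ≤ Real.exp (-s/3) := by
      rw [show ((5:ℝ)/6)^k = Real.exp (Real.log (((5:ℝ)/6)^k)) by
            rw [Real.exp_log (by positivity)],
          Real.exp_le_exp, Real.log_pow]
      have hk2 : 2*s ≤ (k:ℝ) := Nat.le_ceil _
      have h2 : Real.log (5/6 : ℝ) = - Real.log (6/5 : ℝ) := by
        rw [show (5/6 : ℝ) = (6/5 : ℝ)⁻¹ by norm_num, Real.log_inv]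
      rw [h2]
      have h3 : s/3 ≤ (k:ℝ) * Real.log (6/5) := by
        calc s/3 = (2*s) * (1/6) := by ring
          _ ≤ (k:ℝ) * Real.log (6/5) := by
            apply mul_le_mul hk2 hlog65 (by norm_num) (Nat.cast_nonneg _)
      linarith
    calc ((Finset.univ.filter (fun v => ∀ b ∈ B, ¬ H.Adj v b)).card : ℝ)
        ≤ (5/6)^k * Fintype.card V := by
          convert hBdom using 6
      _ ≤ Real.exp (-s/3) * n := by
          apply mul_le_mul hpow (Nat.cast_le.mpr hcard) (Nat.cast_nonneg _)
            (Real.exp_nonneg _)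
      _ = n * Real.exp (-s/3) := mul_comm _ _
end

section
/- Let d be a positive integer and let G' = (V', E') be a graph with |E'| ≥ d·|V'| such that no minor G'' of G' with strictly smaller value of |V(G'')| + |E(G'')| satisfies |E(G'')| ≥ d·|V(G'')|. Then every edge of G' is contained in at least d triangles of G'; in particular, for every edge uv of G', the vertex u is adjacent to at least d neighbors of v. -/
/-- `H` is a minor of `G`: there is a family of pairwise disjoint nonempty branch sets
in `G`, indexed by the vertices of `H`, each inducing a connected subgraph of `G`, such
that every edge of `H` is witnessed by an edge of `G` between the corresponding branch
sets. -/
def SimpleGraph.IsMinor {W V : Type*} (H : SimpleGraph W) (G : SimpleGraph V) : Prop :=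
  ∃ B : W → Set V,
    (∀ i, (B i).Nonempty) ∧
    (∀ i j, i ≠ j → Disjoint (B i) (B j)) ∧
    (∀ i, (G.induce (B i)).Connected) ∧
    (∀ i j, H.Adj i j → ∃ u ∈ B i, ∃ v ∈ B j, G.Adj u v)

open SimpleGraph Set

section Aux

variable {V : Type} (G : SimpleGraph V) (u v : V)

/-- Contraction of the edge `uv` (with `u` absorbing `v`). -/
def contG : SimpleGraph {x : V // x ≠ v} :=
  SimpleGraph.fromRel (fun a b => G.Adj a b ∨ (a.1 = u ∧ G.Adj v b))

variable {G u v}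

lemma contG_adj {a b : {x : V // x ≠ v}} :
    (contG G u v).Adj a b ↔
      a ≠ b ∧ (G.Adj a b ∨ (a.1 = u ∧ G.Adj v b) ∨ (b.1 = u ∧ G.Adj v a)) := by
  rw [contG, SimpleGraph.fromRel_adj]
  constructor
  · rintro ⟨h, (h1 | h1) | (h1 | h1)⟩
    exacts [⟨h, Or.inl h1⟩, ⟨h, Or.inr (Or.inl h1)⟩, ⟨h, Or.inl h1.symm⟩,
      ⟨h, Or.inr (Or.inr h1)⟩]
  · rintro ⟨h, h1 | h1 | h1⟩
    exacts [⟨h, Or.inl (Or.inl h1)⟩, ⟨h, Or.inl (Or.inr h1)⟩, ⟨h, Or.inr (Or.inr h1)⟩]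

lemma connected_induce_singleton (G : SimpleGraph V) (x : V) :
    (G.induce ({x} : Set V)).Connected := by
  rw [connected_iff_exists_forall_reachable]
  refine ⟨⟨x, rfl⟩, fun w => ?_⟩
  have : w = ⟨x, rfl⟩ := Subtype.ext w.2
  rw [this]

lemma connected_induce_pair {x y : V} (h : G.Adj x y) :
    (G.induce ({x, y} : Set V)).Connected := by
  rw [connected_iff_exists_forall_reachable]
  refine ⟨⟨x, Or.inl rfl⟩, fun w => ?_⟩
  rcases w.2 with h1 | h1
  · have : w = ⟨x, Or.inl rfl⟩ := Subtype.ext h1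
    rw [this]
  · refine SimpleGraph.Adj.reachable ?_
    simp only [comap_adj, Function.Embedding.coe_subtype]
    rw [show ((w : V) : V) = y from h1]
    exact h

/-- Elements of the (lifted) edge set of the contraction do not contain `v`. -/
lemma contG_not_mem_v {f : Sym2 V}
    (hf : f ∈ Sym2.map (Subtype.val : {x : V // x ≠ v} → V) '' (contG G u v).edgeSet) :
    v ∉ f := by
  obtain ⟨e, he, rfl⟩ := hf
  induction e with
  | _ a b =>
    rw [Sym2.map_pair_eq, Sym2.mem_iff]
    rintro (h | h)
    · exact a.2 h.symm
    · exact b.2 h.symm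

/-- Lifted contraction edges that are not edges of `G` have the form `s(u,w)` with
`G.Adj v w`. -/
lemma contG_new_edge {f : Sym2 V}
    (hf : f ∈ Sym2.map (Subtype.val : {x : V // x ≠ v} → V) '' (contG G u v).edgeSet)
    (hfE : f ∉ G.edgeSet) :
    ∃ w, w ≠ u ∧ w ≠ v ∧ f = s(u, w) ∧ G.Adj v w := by
  obtain ⟨e, he, rfl⟩ := hf
  induction e with
  | _ a b =>
    rw [SimpleGraph.mem_edgeSet, contG_adj] at he
    rw [Sym2.map_pair_eq] at hfE ⊢
    obtain ⟨hne, h1 | h1 | h1⟩ := he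
    · exact absurd (G.mem_edgeSet.mpr h1) hfE
    · refine ⟨b.1, ?_, b.2, by rw [h1.1], h1.2⟩
      intro h
      exact hne (Subtype.ext (h1.1.trans h.symm))
    · refine ⟨a.1, ?_, a.2, by rw [h1.1, Sym2.eq_swap], h1.2⟩
      intro h
      exact hne (Subtype.ext (h.trans h1.1.symm))

lemma contG_edges_le [Fintype V] (G : SimpleGraph V) (u v : V) :
    (contG G u v).edgeSet.ncard ≤ G.edgeSet.ncard := by
  classical
  have hψ : Function.Injective (Sym2.map (Subtype.val : {x : V // x ≠ v} → V)) :=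
    Sym2.map.injective Subtype.val_injective
  rw [← Set.ncard_image_of_injective _ hψ]
  set g : Sym2 V → Sym2 V :=
    fun f => if f ∈ G.edgeSet then f else Sym2.map (fun x => if x = u then v else x) f with hg
  have hgnew : ∀ w : V, w ≠ u → g s(u, w) = s(v, w) ∨ s(u, w) ∈ G.edgeSet := by
    intro w hw
    by_cases h : s(u, w) ∈ G.edgeSet
    · exact Or.inr h
    · left
      simp [hg, h, hw]
  refine Set.ncard_le_ncard_of_injOn g ?_ ?_ (Set.toFinite _)
  · intro f hf
    by_cases hfE : f ∈ G.edgeSet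
    · simpa [hg, if_pos hfE] using hfE
    · obtain ⟨w, hwu, hwv, rfl, hadj⟩ := contG_new_edge hf hfE
      rcases hgnew w hwu with h | h
      · rw [h]; exact G.mem_edgeSet.mpr hadj
      · exact absurd h hfE
  · intro f1 hf1 f2 hf2 heq
    by_cases h1 : f1 ∈ G.edgeSet <;> by_cases h2 : f2 ∈ G.edgeSet
    · simpa only [hg, if_pos h1, if_pos h2] using heq
    · obtain ⟨w, hwu, hwv, rfl, hadj⟩ := contG_new_edge hf2 h2
      rcases hgnew w hwu with h | h
      · simp only [hg, if_pos h1] at heq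
        simp only [hg] at h
        exfalso
        apply contG_not_mem_v hf1
        rw [heq, h, Sym2.mem_iff]
        exact Or.inl rfl
      · exact absurd h h2
    · obtain ⟨w, hwu, hwv, rfl, hadj⟩ := contG_new_edge hf1 h1
      rcases hgnew w hwu with h | h
      · simp only [hg, if_pos h2] at heq
        simp only [hg] at h
        exfalso
        apply contG_not_mem_v hf2
        rw [← heq, h, Sym2.mem_iff]
        exact Or.inl rfl
      · exact absurd h h1
    · obtain ⟨w1, hw1u, hw1v, rfl, hadj1⟩ := contG_new_edge hf1 h1
      obtain ⟨w2, hw2u, hw2v, rfl, hadj2⟩ := contG_new_edge hf2 h2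
      rcases hgnew w1 hw1u with ha | ha; swap
      · exact absurd ha h1
      rcases hgnew w2 hw2u with hb | hb; swap
      · exact absurd hb h2
      simp only [hg] at heq ha hb
      rw [ha, hb, Sym2.eq_iff] at heq
      rcases heq with ⟨-, h⟩ | ⟨h, h'⟩
      · rw [h]
      · exact absurd h' hw1v


lemma contG_edges_ge [Fintype V] (huv : G.Adj u v) :
    G.edgeSet.ncard ≤
      (contG G u v).edgeSet.ncard + (G.neighborSet u ∩ G.neighborSet v).ncard + 1 := by
  classical
  set C := G.neighborSet u ∩ G.neighborSet v with hC
  set T : Set (Sym2 V) := (fun w => s(v, w)) '' C with hT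
  set X : Set (Sym2 V) := insert s(u, v) T with hX
  have hXE : X ⊆ G.edgeSet := by
    intro f hf
    rw [hX, Set.mem_insert_iff] at hf
    rcases hf with rfl | hf
    · exact G.mem_edgeSet.mpr huv
    · rw [hT, Set.mem_image] at hf
      obtain ⟨w, hw, rfl⟩ := hf
      exact G.mem_edgeSet.mpr hw.2
  have hXcard : X.ncard ≤ C.ncard + 1 :=
    le_trans (Set.ncard_insert_le _ _) (Nat.add_le_add_right (Set.ncard_image_le (Set.toFinite _)) 1)
  set g : Sym2 V → Sym2 V :=
    fun f => if f ∈ G.edgeSet then f else Sym2.map (fun x => if x = u then v else x) f with hg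
  set r : V → V := fun x => if x = v then u else x with hr
  have claim : ∀ a b : V, b ≠ v → G.Adj a b → s(a, b) ∉ X →
      Sym2.map r s(a, b) ∈
        Sym2.map (Subtype.val : {x : V // x ≠ v} → V) '' (contG G u v).edgeSet ∧
      g (Sym2.map r s(a, b)) = s(a, b) := by
    intro a b hbv hab hXm
    by_cases hav : a = v
    · subst hav
      have hbu : b ≠ u := by
        rintro rfl
        apply hXm
        rw [hX, Sym2.eq_swap]
        exact Set.mem_insert _ _
      have hφ : Sym2.map r s(a, b) = s(u, b) := by
        simp [hr, Sym2.map_pair_eq, hbv]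
      have hnotE : s(u, b) ∉ G.edgeSet := by
        intro hE
        apply hXm
        rw [hX]
        refine Set.mem_insert_of_mem _ ?_
        rw [hT, Set.mem_image]
        exact ⟨b, ⟨G.mem_edgeSet.mp hE, hab⟩, rfl⟩
      constructor
      · rw [hφ]
        refine ⟨s(⟨u, huv.ne⟩, ⟨b, hbv⟩), ?_, by rw [Sym2.map_pair_eq]⟩
        rw [SimpleGraph.mem_edgeSet, contG_adj]
        exact ⟨fun h => hbu (congrArg Subtype.val h).symm, Or.inr (Or.inl ⟨rfl, hab⟩)⟩
      · rw [hφ]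
        simp [hg, hnotE, hbu]
    · have hφ : Sym2.map r s(a, b) = s(a, b) := by
        simp [hr, Sym2.map_pair_eq, hav, hbv]
      constructor
      · rw [hφ]
        refine ⟨s(⟨a, hav⟩, ⟨b, hbv⟩), ?_, by rw [Sym2.map_pair_eq]⟩
        rw [SimpleGraph.mem_edgeSet, contG_adj]
        exact ⟨fun h => hab.ne (congrArg Subtype.val h), Or.inl hab⟩
      · rw [hφ, hg]
        simp only [if_pos (G.mem_edgeSet.mpr hab)]
  have hrep : ∀ e ∈ G.edgeSet \ X, ∃ a b : V, b ≠ v ∧ G.Adj a b ∧ e = s(a, b) := by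
    intro e he
    induction e with
    | _ x y =>
      have hxy : G.Adj x y := G.mem_edgeSet.mp he.1
      by_cases h : y = v
      · subst h
        exact ⟨y, x, hxy.ne, hxy.symm, Sym2.eq_swap⟩
      · exact ⟨x, y, h, hxy, rfl⟩
  have hψ : Function.Injective (Sym2.map (Subtype.val : {x : V // x ≠ v} → V)) :=
    Sym2.map.injective Subtype.val_injective
  have hkey : (G.edgeSet \ X).ncard ≤ (contG G u v).edgeSet.ncard := by
    rw [← Set.ncard_image_of_injective _ hψ]
    refine Set.ncard_le_ncard_of_injOn (Sym2.map r) ?_ ?_ (Set.toFinite _)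
    · intro e he
      obtain ⟨a, b, hbv, hab, rfl⟩ := hrep e he
      exact (claim a b hbv hab he.2).1
    · intro e1 he1 e2 he2 heq
      obtain ⟨a1, b1, hb1, ha1, rfl⟩ := hrep e1 he1
      obtain ⟨a2, b2, hb2, ha2, rfl⟩ := hrep e2 he2
      calc s(a1, b1) = g (Sym2.map r s(a1, b1)) := (claim a1 b1 hb1 ha1 he1.2).2.symm
        _ = g (Sym2.map r s(a2, b2)) := by rw [heq]
        _ = s(a2, b2) := (claim a2 b2 hb2 ha2 he2.2).2
  have hdiff : (G.edgeSet \ X).ncard = G.edgeSet.ncard - X.ncard :=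
    Set.ncard_diff hXE (Set.toFinite _)
  have hXle : X.ncard ≤ G.edgeSet.ncard := Set.ncard_le_ncard hXE (Set.toFinite _)
  omega


lemma contG_isMinor (huv : G.Adj u v) : (contG G u v).IsMinor G := by
  classical
  have hself : ∀ k : {x : V // x ≠ v},
      (k : V) ∈ (if (k : V) = u then ({u, v} : Set V) else {(k : V)}) := by
    intro k
    by_cases h : (k : V) = u <;> simp [h]
  refine ⟨fun i => if i.1 = u then ({u, v} : Set V) else {i.1}, ?_, ?_, ?_, ?_⟩
  · intro i
    exact ⟨i.1, hself i⟩
  · intro i j hij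
    have hval : i.1 ≠ j.1 := fun h => hij (Subtype.ext h)
    dsimp only
    by_cases hi : i.1 = u <;> by_cases hj : j.1 = u <;>
      simp only [hi, hj, if_true, if_false, if_pos, if_neg, not_false_iff]
    · exact absurd (hi.trans hj.symm) hval
    · rw [Set.disjoint_singleton_right]
      rintro (h | h)
      · exact hj h
      · exact j.2 h
    · rw [Set.disjoint_singleton_left]
      rintro (h | h)
      · exact hi h
      · exact i.2 h
    · rw [Set.disjoint_singleton_right, Set.mem_singleton_iff]
      exact fun h => hval h.symm
  · intro i
    dsimp only
    by_cases h : i.1 = u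
    · rw [if_pos h]
      exact connected_induce_pair huv
    · rw [if_neg h]
      exact connected_induce_singleton G i.1
  · intro i j hadj
    rw [contG_adj] at hadj
    obtain ⟨hne, h1 | h1 | h1⟩ := hadj
    · exact ⟨i.1, hself i, j.1, hself j, h1⟩
    · refine ⟨v, ?_, j.1, hself j, h1.2⟩
      dsimp only
      rw [if_pos h1.1]
      exact Or.inr rfl
    · refine ⟨i.1, hself i, v, ?_, h1.2.symm⟩
      dsimp only
      rw [if_pos h1.1]
      exact Or.inr rfl


end Aux

/-- If `G'` satisfies `|E'| ≥ d·|V'|` and no minor of `G'` with strictly smaller value of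
`|V| + |E|` has at least `d` times as many edges as vertices, then every edge of `G'`
lies in at least `d` triangles: the endpoints of every edge have at least `d` common
neighbors. -/
theorem edges_in_many_triangles_of_minimal_minor
    (d : ℕ) (hd : 0 < d) (V' : Type) [Fintype V'] (G' : SimpleGraph V')
    (hE : d * Fintype.card V' ≤ G'.edgeSet.ncard)
    (hmin : ∀ (W : Type) [Fintype W] (H : SimpleGraph W), H.IsMinor G' →
      Fintype.card W + H.edgeSet.ncard < Fintype.card V' + G'.edgeSet.ncard →
      H.edgeSet.ncard < d * Fintype.card W) :
    ∀ u v : V', G'.Adj u v →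
      d ≤ (G'.neighborSet u ∩ G'.neighborSet v).ncard := by
  classical
  intro u v huv
  by_contra hlt
  push_neg at hlt
  have hn : 1 ≤ Fintype.card V' := Fintype.card_pos_iff.mpr ⟨u⟩
  have hcardW : Fintype.card {x : V' // x ≠ v} = Fintype.card V' - 1 := by
    rw [Fintype.card_subtype_compl, Fintype.card_subtype_eq]
  have h1 := contG_edges_le G' u v
  have h2 := contG_edges_ge huv
  have h3 := hmin {x : V' // x ≠ v} (contG G' u v) (contG_isMinor huv)
    (by rw [hcardW]; omega)
  rw [hcardW] at h3
  have h4 : d * (Fintype.card V' - 1) + d = d * Fintype.card V' := by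
    rw [← Nat.mul_succ, Nat.succ_eq_add_one, Nat.sub_add_cancel hn]
  set A := d * Fintype.card V' with hA
  set B := d * (Fintype.card V' - 1) with hB
  omega
end

section
/- Let d be a positive integer and let H be a graph with at most 2d vertices and minimum degree δ(H) ≥ d. Then H contains an induced subgraph H₁ that is ⌈d/3⌉-connected and has minimum degree δ(H₁) ≥ 2d/3. -/
open Set

/-- A graph is `k`-connected if it has more than `k` vertices and remains connected
after the deletion of any set of fewer than `k` vertices. -/
def SimpleGraph.KConnected {V : Type*} (G : SimpleGraph V) (k : ℕ) : Prop :=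
  k < Nat.card V ∧ ∀ S : Set V, S.ncard < k → (G.induce (Sᶜ : Set V)).Connected

lemma ncard_induce_neighborSet {V : Type*} (H : SimpleGraph V) (A : Set V) (v : ↥A) :
    ((H.induce A).neighborSet v).ncard = (H.neighborSet ↑v ∩ A).ncard := by
  rw [← Set.ncard_image_of_injective _ (Subtype.val_injective (p := (· ∈ A)))]
  congr 1
  ext w
  constructor
  · rintro ⟨b, hb, rfl⟩
    exact ⟨hb, b.2⟩
  · rintro ⟨hw, hwA⟩
    exact ⟨⟨w, hwA⟩, hw, rfl⟩

lemma ch {W : Type} [Fintype W] (G : SimpleGraph W) (δ k : ℕ)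
    (hδ : ∀ v, δ ≤ (G.neighborSet v).ncard)
    (hk : k < Fintype.card W)
    (h2 : Fintype.card W + k ≤ 2 * δ + 2) : G.KConnected k := by
  constructor
  · rwa [Nat.card_eq_fintype_card]
  intro S hS
  have hScne : Sᶜ.Nonempty := by
    rcases Set.eq_empty_or_nonempty Sᶜ with h | h
    · exfalso
      rw [Set.compl_empty_iff] at h
      subst h
      rw [Set.ncard_univ, Nat.card_eq_fintype_card] at hS
      omega
    · exact h
  rw [SimpleGraph.connected_iff]
  refine ⟨?_, hScne.to_subtype⟩
  intro u v
  rcases eq_or_ne u v with rfl | huv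
  · exact SimpleGraph.Reachable.refl u
  by_cases hadj : G.Adj ↑u ↑v
  · exact SimpleGraph.Adj.reachable hadj
  have hvalne : (u : W) ≠ (v : W) := fun h => huv (Subtype.val_injective h)
  set Nu := G.neighborSet ↑u with hNu
  set Nv := G.neighborSet ↑v with hNv
  have hdisj : Disjoint (Nu ∪ Nv) {(u : W), (v : W)} := by
    rw [Set.disjoint_right]
    intro x hx
    rcases hx with rfl | rfl
    · rintro (h | h)
      · exact G.irrefl h
      · exact hadj (G.adj_symm h)
    · rintro (h | h)
      · exact hadj h
      · exact G.irrefl h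
  have hcard2 : ({(u : W), (v : W)} : Set W).ncard = 2 := Set.ncard_pair hvalne
  have hUnion : (Nu ∪ Nv).ncard + 2 ≤ Fintype.card W := by
    have := Set.ncard_union_eq hdisj (Set.toFinite _) (Set.toFinite _)
    have hle : ((Nu ∪ Nv) ∪ {(u:W), (v:W)}).ncard ≤ Fintype.card W := by
      have h := Set.ncard_le_ncard (Set.subset_univ ((Nu ∪ Nv) ∪ {(u:W), (v:W)})) (Set.toFinite _)
      simpa [Set.ncard_univ, Nat.card_eq_fintype_card] using h
    omega
  have hinter : k ≤ (Nu ∩ Nv).ncard := by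
    have h3 := Set.ncard_union_add_ncard_inter Nu Nv (Set.toFinite _) (Set.toFinite _)
    have h4 : δ ≤ Nu.ncard := hδ _
    have h5 : δ ≤ Nv.ncard := hδ _
    omega
  obtain ⟨w, hwN, hwS⟩ : ∃ w ∈ Nu ∩ Nv, w ∉ S :=
    Set.exists_mem_notMem_of_ncard_lt_ncard (lt_of_lt_of_le hS hinter) (Set.toFinite _)
  have h1 : (G.induce Sᶜ).Adj u ⟨w, hwS⟩ := hwN.1
  have h2' : (G.induce Sᶜ).Adj ⟨w, hwS⟩ v := (G.adj_symm hwN.2)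
  exact (SimpleGraph.Adj.reachable h1).trans (SimpleGraph.Adj.reachable h2')

/-- Iso between double-induce over `univ` and single induce. -/
def induceUnivIso {V : Type} (H : SimpleGraph V) (S' : Set ↥(Set.univ : Set V)) :
    ((H.induce (Set.univ : Set V)).induce S'ᶜ) ≃g (H.induce ((Subtype.val '' S')ᶜ)) where
  toFun := fun x => ⟨x.1.1, by
    rintro ⟨a, ha, hav⟩
    exact x.2 (by rwa [Subtype.val_injective hav] at ha)⟩
  invFun := fun y => ⟨⟨y.1, trivial⟩, fun h => y.2 ⟨⟨y.1, trivial⟩, h, rfl⟩⟩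
  left_inv := fun x => Subtype.ext (Subtype.ext rfl)
  right_inv := fun y => Subtype.ext rfl
  map_rel_iff' := Iff.rfl

/-- Core of the separator case. -/
lemma case2core {V : Type} [Fintype V] (H : SimpleGraph V) (d : ℕ) (hd : 0 < d)
    (hcard : Fintype.card V ≤ 2 * d)
    (k : ℕ) (hk3 : 3 * k ≤ d + 2) (hdk : d ≤ 3 * k)
    (S : Set V) (hS : S.ncard < k)
    (B : Set V) (hBne : B.Nonempty)
    (hBS : Disjoint B S)
    (hclosed : ∀ x ∈ B, H.neighborSet x \ S ⊆ B)
    (hdegB : ∀ x ∈ B, d ≤ (H.neighborSet x).ncard)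
    (hsize : 2 * B.ncard + S.ncard ≤ Fintype.card V) :
    (H.induce B).KConnected k ∧
      ∀ v : B, (2 * d : ℝ) / 3 ≤ (((H.induce B).neighborSet v).ncard : ℝ) := by
  set s := S.ncard with hs
  set m := B.ncard with hm
  -- degree of each vertex of B inside B
  have hdegIn : ∀ x ∈ B, d - s ≤ (H.neighborSet x ∩ B).ncard := by
    intro x hx
    have hsub : H.neighborSet x \ S ⊆ H.neighborSet x ∩ B :=
      fun w hw => ⟨hw.1, hclosed x hx hw⟩
    have h1 : (H.neighborSet x).ncard ≤ (H.neighborSet x \ S).ncard + S.ncard :=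
      Set.ncard_le_ncard_diff_add_ncard _ _ (Set.toFinite _)
    have h2 : (H.neighborSet x \ S).ncard ≤ (H.neighborSet x ∩ B).ncard :=
      Set.ncard_le_ncard hsub (Set.toFinite _)
    have h3 := hdegB x hx
    omega
  -- m ≥ d + 1 - s
  have hm1 : d + 1 ≤ m + s := by
    obtain ⟨x, hx⟩ := hBne
    have h1 := hdegIn x hx
    have hsub : H.neighborSet x ∩ B ⊆ B \ {x} := by
      rintro w ⟨hw1, hw2⟩
      exact ⟨hw2, fun h => H.irrefl (h ▸ hw1)⟩
    have h2 : (H.neighborSet x ∩ B).ncard ≤ (B \ {x}).ncard :=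
      Set.ncard_le_ncard hsub (Set.toFinite _)
    have h3 : (B \ {x}).ncard = m - 1 := Set.ncard_diff_singleton_of_mem hx
    have h4 : 0 < m := (Set.ncard_pos (Set.toFinite _)).mpr ⟨x, hx⟩
    omega
  haveI : Fintype ↥B := Fintype.ofFinite ↥B
  have hcardB : Fintype.card ↥B = m := by
    rw [← Nat.card_eq_fintype_card, Nat.card_coe_set_eq]
  have hδ' : ∀ v : ↥B, d - s ≤ ((H.induce B).neighborSet v).ncard := by
    intro v
    rw [ncard_induce_neighborSet]
    exact hdegIn ↑v v.2
  have hsd : s + 1 ≤ k := hS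
  constructor
  · apply ch _ (d - s) k hδ'
    · rw [hcardB]; omega
    · rw [hcardB]; omega
  · intro v
    have h1 := hδ' v
    have h2 : 2 * d ≤ ((H.induce B).neighborSet v).ncard * 3 := by omega
    rw [div_le_iff₀ (by norm_num : (0:ℝ) < 3)]
    exact_mod_cast h2

/-- Every graph `H` with at most `2d` vertices and minimum degree at least `d` contains
an induced subgraph that is `⌈d/3⌉`-connected and has minimum degree at least `2d/3`. -/
theorem exists_highly_connected_subgraph
    (d : ℕ) (hd : 0 < d) (V : Type) [Fintype V] [Nonempty V] (H : SimpleGraph V)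
    (hcard : Fintype.card V ≤ 2 * d)
    (hdeg : ∀ v : V, d ≤ (H.neighborSet v).ncard) :
    ∃ A : Set V, (H.induce A).KConnected ⌈(d : ℝ) / 3⌉₊ ∧
      ∀ v : A, (2 * d : ℝ) / 3 ≤ (((H.induce A).neighborSet v).ncard : ℝ) := by
  set k := ⌈(d : ℝ) / 3⌉₊ with hkdef
  have hdk : d ≤ 3 * k := by
    have h := Nat.le_ceil ((d:ℝ)/3)
    rw [div_le_iff₀ (by norm_num : (0:ℝ) < 3)] at h
    have h' : (d:ℝ) ≤ (3*k : ℕ) := by push_cast; linarith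
    exact_mod_cast h'
  have hk3 : 3 * k ≤ d + 2 := by
    have h := Nat.ceil_lt_add_one (by positivity : (0:ℝ) ≤ (d:ℝ)/3)
    have h' : ((3*k : ℕ) : ℝ) < ((d + 3 : ℕ) : ℝ) := by push_cast; linarith
    have := Nat.cast_lt.mp h'
    omega
  have hn : d < Fintype.card V := by
    obtain ⟨v⟩ := ‹Nonempty V›
    have h1 := hdeg v
    have hsub : H.neighborSet v ⊆ ({v} : Set V)ᶜ := by
      intro w hw
      simp only [Set.mem_compl_iff, Set.mem_singleton_iff]
      rintro rfl
      exact H.irrefl hw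
    have h2 : (H.neighborSet v).ncard ≤ (({v} : Set V)ᶜ).ncard :=
      Set.ncard_le_ncard hsub (Set.toFinite _)
    have h3 : ({v} : Set V).ncard + (({v} : Set V)ᶜ).ncard = Fintype.card V := by
      rw [Set.ncard_add_ncard_compl, Nat.card_eq_fintype_card]
    rw [Set.ncard_singleton] at h3
    omega
  by_cases hcon : ∀ S : Set V, S.ncard < k → (H.induce Sᶜ).Connected
  · refine ⟨Set.univ, ⟨?_, ?_⟩, ?_⟩
    · rw [Nat.card_coe_set_eq, Set.ncard_univ, Nat.card_eq_fintype_card]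
      omega
    · intro S' hS'
      have him : (Subtype.val '' S').ncard < k := by
        rwa [Set.ncard_image_of_injective _ Subtype.val_injective]
      exact (induceUnivIso H S').connected_iff.mpr (hcon _ him)
    · intro v
      rw [ncard_induce_neighborSet, Set.inter_univ]
      have h1 := hdeg ↑v
      have h2 : 2 * d ≤ (H.neighborSet ↑v).ncard * 3 := by omega
      rw [div_le_iff₀ (by norm_num : (0:ℝ) < 3)]
      exact_mod_cast h2
  · push_neg at hcon
    obtain ⟨S, hS, hdisc⟩ := hcon
    have hScne : Sᶜ.Nonempty := by
      rcases Set.eq_empty_or_nonempty Sᶜ with h | h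
      · exfalso
        rw [Set.compl_empty_iff] at h
        subst h
        rw [Set.ncard_univ, Nat.card_eq_fintype_card] at hS
        omega
      · exact h
    have hne : Nonempty ↥Sᶜ := hScne.to_subtype
    have hnp : ¬ (H.induce Sᶜ).Preconnected := by
      intro hp
      exact hdisc ((SimpleGraph.connected_iff _).mpr ⟨hp, hne⟩)
    rw [SimpleGraph.Preconnected] at hnp
    push_neg at hnp
    obtain ⟨u, v, huv⟩ := hnp
    set X : Set V := Subtype.val '' {w : ↥Sᶜ | (H.induce Sᶜ).Reachable u w} with hXdef
    set Y : Set V := Subtype.val '' {w : ↥Sᶜ | ¬ (H.induce Sᶜ).Reachable u w} with hYdef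
    have hXS : X ⊆ Sᶜ := by rintro x ⟨x', _, rfl⟩; exact x'.2
    have hYS : Y ⊆ Sᶜ := by rintro x ⟨x', _, rfl⟩; exact x'.2
    have hXSdis : Disjoint X S := Set.disjoint_right.mpr (fun a ha hx => (hXS hx) ha)
    have hYSdis : Disjoint Y S := Set.disjoint_right.mpr (fun a ha hx => (hYS hx) ha)
    have hu : (u : V) ∈ X := ⟨u, SimpleGraph.Reachable.refl u, rfl⟩
    have hv : (v : V) ∈ Y := ⟨v, huv, rfl⟩
    have hXclosed : ∀ x ∈ X, H.neighborSet x \ S ⊆ X := by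
      rintro x ⟨x', hx', rfl⟩ w ⟨hw, hwS⟩
      have hadj : (H.induce Sᶜ).Adj x' ⟨w, hwS⟩ := hw
      exact ⟨⟨w, hwS⟩, hx'.trans hadj.reachable, rfl⟩
    have hYclosed : ∀ y ∈ Y, H.neighborSet y \ S ⊆ Y := by
      rintro y ⟨y', hy', rfl⟩ w ⟨hw, hwS⟩
      refine ⟨⟨w, hwS⟩, fun hr => hy' ?_, rfl⟩
      have hadj : (H.induce Sᶜ).Adj ⟨w, hwS⟩ y' := H.adj_symm hw
      exact hr.trans hadj.reachable
    have hdisjXY : Disjoint X Y := by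
      rw [Set.disjoint_left]
      rintro a ⟨a', ha', rfl⟩ ⟨b', hb', hba⟩
      have heq : b' = a' := Subtype.val_injective hba
      subst heq
      exact hb' ha'
    have hunion : X ∪ Y = Sᶜ := by
      apply Set.Subset.antisymm (Set.union_subset hXS hYS)
      intro w hw
      by_cases hr : (H.induce Sᶜ).Reachable u ⟨w, hw⟩
      · exact Or.inl ⟨⟨w, hw⟩, hr, rfl⟩
      · exact Or.inr ⟨⟨w, hw⟩, hr, rfl⟩
    have hsum : X.ncard + Y.ncard + S.ncard = Fintype.card V := by
      rw [← Set.ncard_union_eq hdisjXY (Set.toFinite _) (Set.toFinite _), hunion]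
      rw [add_comm, Set.ncard_add_ncard_compl, Nat.card_eq_fintype_card]
    rcases le_total X.ncard Y.ncard with hle | hle
    · refine ⟨X, case2core H d hd hcard k hk3 hdk S hS X ⟨↑u, hu⟩ hXSdis hXclosed
        (fun x _ => hdeg x) (by omega)⟩
    · refine ⟨Y, case2core H d hd hcard k hk3 hdk S hS Y ⟨↑v, hv⟩ hYSdis hYclosed
        (fun x _ => hdeg x) (by omega)⟩
end

section
/- Let k be a positive integer and let G be a graph in which every two distinct vertices have at least k common neighbors. Then G is k-connected. -/
/-- If every two distinct vertices of a graph `G` have at least `k ≥ 1` common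
neighbors, then `G` is `k`-connected. -/
theorem kConnected_of_common_neighbors
    (k : ℕ) (hk : 0 < k) (V : Type) [Fintype V] [Nontrivial V] (G : SimpleGraph V)
    (h : ∀ u v : V, u ≠ v → k ≤ (G.neighborSet u ∩ G.neighborSet v).ncard) :
    G.KConnected k := by
  have hcard : k < Nat.card V := by
    obtain ⟨u, v, huv⟩ := exists_pair_ne V
    have hN := h u v huv
    have hu : u ∉ G.neighborSet u ∩ G.neighborSet v := fun hu => G.loopless.irrefl u hu.1
    have hle : (insert u (G.neighborSet u ∩ G.neighborSet v)).ncard ≤ Nat.card V := by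
      rw [← Set.ncard_univ]
      exact Set.ncard_le_ncard (Set.subset_univ _) (Set.toFinite _)
    rw [Set.ncard_insert_of_notMem hu (Set.toFinite _)] at hle
    omega
  refine ⟨hcard, fun S hS => ?_⟩
  have key : ∀ u v : V, u ≠ v → ∃ w, w ∉ S ∧ G.Adj u w ∧ G.Adj v w := by
    intro u v huv
    by_contra hcon
    push_neg at hcon
    have hsub : G.neighborSet u ∩ G.neighborSet v ⊆ S := by
      intro w hw
      by_contra hws
      exact (hcon w hws hw.1) hw.2
    have := Set.ncard_le_ncard hsub (Set.toFinite _)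
    have := h u v huv
    omega
  have hne : (Sᶜ : Set V).Nonempty := by
    rw [Set.nonempty_compl]
    intro hSu
    rw [hSu, Set.ncard_univ] at hS
    omega
  rw [SimpleGraph.connected_iff]
  refine ⟨fun a b => ?_, ⟨⟨hne.choose, hne.choose_spec⟩⟩⟩
  rcases eq_or_ne a b with rfl | hab
  · exact SimpleGraph.Reachable.refl a
  · have hab' : (a : V) ≠ (b : V) := fun e => hab (Subtype.ext e)
    obtain ⟨w, hwS, haw, hbw⟩ := key a b hab'
    have h1 : (G.induce (Sᶜ : Set V)).Adj a ⟨w, hwS⟩ := haw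
    have h2 : (G.induce (Sᶜ : Set V)).Adj ⟨w, hwS⟩ b := hbw.symm
    exact h1.reachable.trans h2.reachable
end

section
/- Let G be a connected graph on n vertices with minimum degree δ satisfying n < 6δ. Then the diameter of G is at most 14; that is, every two vertices of G are joined by a path with at most 14 edges. -/
open SimpleGraph Finset

private lemma dist_start_getVert_le {V : Type} {G : SimpleGraph V} (hconn : G.Connected)
    {u v : V} (p : G.Walk u v) (i : ℕ) : G.dist u (p.getVert i) ≤ i := by
  induction i with
  | zero => simp [p.getVert_zero, SimpleGraph.dist_self]
  | succ i ih =>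
    by_cases hi : i < p.length
    · have hadj := p.adj_getVert_succ hi
      have h1 : G.dist (p.getVert i) (p.getVert (i + 1)) ≤ 1 := by
        have := SimpleGraph.dist_le (SimpleGraph.Walk.cons hadj SimpleGraph.Walk.nil)
        simpa using this
      calc G.dist u (p.getVert (i + 1))
          ≤ G.dist u (p.getVert i) + G.dist (p.getVert i) (p.getVert (i + 1)) :=
            hconn.dist_triangle
        _ ≤ i + 1 := Nat.add_le_add ih h1
    · push_neg at hi
      rw [p.getVert_of_length_le (le_trans hi (Nat.le_succ i))]
      calc G.dist u v ≤ i := by rw [← p.getVert_of_length_le hi]; exact ih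
        _ ≤ i + 1 := Nat.le_succ i

private lemma dist_getVert_end_le {V : Type} {G : SimpleGraph V} (hconn : G.Connected)
    {u v : V} (p : G.Walk u v) {i : ℕ} (hi : i ≤ p.length) :
    G.dist (p.getVert i) v ≤ p.length - i := by
  have h := dist_start_getVert_le hconn p.reverse (p.length - i)
  rw [p.getVert_reverse] at h
  have : p.length - (p.length - i) = i := Nat.sub_sub_self hi
  rw [this] at h
  rw [SimpleGraph.dist_comm]
  simpa using h

/-- On a geodesic, vertices at index distance `j - i` are at graph distance ≥ `j - i`. -/
private lemma dist_getVert_ge {V : Type} {G : SimpleGraph V} (hconn : G.Connected)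
    {u v : V} (p : G.Walk u v) (hp : p.length = G.dist u v) {i j : ℕ}
    (hij : i ≤ j) (hj : j ≤ p.length) :
    j - i ≤ G.dist (p.getVert i) (p.getVert j) := by
  have h1 : G.dist u (p.getVert i) ≤ i := dist_start_getVert_le hconn p i
  have h2 : G.dist (p.getVert j) v ≤ p.length - j := dist_getVert_end_le hconn p hj
  have htri : G.dist u v ≤ G.dist u (p.getVert i) + G.dist (p.getVert i) (p.getVert j) +
      G.dist (p.getVert j) v :=
    le_trans hconn.dist_triangle (Nat.add_le_add_right hconn.dist_triangle _)
  omega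

/-- A connected graph on `n` vertices with minimum degree `δ` satisfying `n < 6δ` has
diameter at most `14`: every two vertices are joined by a path with at most 14 edges. -/
theorem diameter_le_fourteen
    (V : Type) [Fintype V] [Nonempty V] (G : SimpleGraph V) [DecidableRel G.Adj]
    (hconn : G.Connected) (hdeg : Fintype.card V < 6 * G.minDegree) :
    ∀ u v : V, G.dist u v ≤ 14 := by
  classical
  intro u v
  by_contra hlt
  push_neg at hlt
  obtain ⟨p, hp⟩ := hconn.exists_walk_length_eq_dist u v
  have hlen : 15 ≤ p.length := by omega
  -- the six vertices at indices 0,3,...,15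
  set f : Fin 6 → V := fun k => p.getVert (3 * k) with hf
  -- closed neighborhoods
  set S : Fin 6 → Finset V := fun k => insert (f k) (G.neighborFinset (f k)) with hS
  have hcard : ∀ k, G.minDegree + 1 ≤ (S k).card := by
    intro k
    have hnm : f k ∉ G.neighborFinset (f k) := by
      simp [SimpleGraph.mem_neighborFinset]
    rw [hS]
    simp only
    rw [Finset.card_insert_of_notMem hnm, SimpleGraph.card_neighborFinset_eq_degree]
    exact Nat.add_le_add_right (G.minDegree_le_degree _) 1
  have hdist1 : ∀ (k : Fin 6) (y : V), y ∈ S k → G.dist (f k) y ≤ 1 := by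
    intro k y hy
    rw [hS] at hy
    simp only [Finset.mem_insert, SimpleGraph.mem_neighborFinset] at hy
    rcases hy with rfl | hadj
    · simp [SimpleGraph.dist_self]
    · have := SimpleGraph.dist_le (SimpleGraph.Walk.cons hadj SimpleGraph.Walk.nil)
      simpa using this
  have hdisj : ∀ k l : Fin 6, k ≠ l → Disjoint (S k) (S l) := by
    intro k l hkl
    rw [Finset.disjoint_left]
    intro y hyk hyl
    have h1 := hdist1 k y hyk
    have h2 := hdist1 l y hyl
    have hd : G.dist (f k) (f l) ≤ 2 := by
      calc G.dist (f k) (f l) ≤ G.dist (f k) y + G.dist y (f l) := hconn.dist_triangle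
        _ ≤ 1 + 1 := by rw [SimpleGraph.dist_comm (u := y)]; exact Nat.add_le_add h1 h2
        _ = 2 := rfl
    -- but distance along geodesic is at least 3
    rcases lt_or_gt_of_ne hkl with h | h
    · have hge : 3 * (l : ℕ) - 3 * (k : ℕ) ≤ G.dist (f k) (f l) := by
        apply dist_getVert_ge hconn p hp (Nat.mul_le_mul_left 3 (le_of_lt h))
        have : (l : ℕ) ≤ 5 := by omega
        omega
      have : (k : ℕ) < l := h
      omega
    · have hge : 3 * (k : ℕ) - 3 * (l : ℕ) ≤ G.dist (f l) (f k) := by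
        apply dist_getVert_ge hconn p hp (Nat.mul_le_mul_left 3 (le_of_lt h))
        have : (k : ℕ) ≤ 5 := by omega
        omega
      rw [SimpleGraph.dist_comm (u := f l)] at hge
      have : (l : ℕ) < k := h
      omega
  -- counting
  have hsum : ∑ k : Fin 6, (S k).card ≤ Fintype.card V := by
    rw [← Finset.card_biUnion (fun k _ l _ h => hdisj k l h)]
    exact Finset.card_le_card (Finset.subset_univ _) |>.trans (by rw [Finset.card_univ])
  have : 6 * (G.minDegree + 1) ≤ ∑ k : Fin 6, (S k).card := by
    calc 6 * (G.minDegree + 1) = ∑ _k : Fin 6, (G.minDegree + 1) := by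
          simp [Finset.sum_const, mul_comm]
      _ ≤ ∑ k : Fin 6, (S k).card := Finset.sum_le_sum fun k _ => hcard k
  omega
end

section
/- Let G be a connected graph of diameter at most D, and let S ⊆ V(G) be a nonempty set of vertices such that the subgraph of G induced by S has at most k connected components. Then there exists a set S' with S ⊆ S' ⊆ V(G), |S'| ≤ |S| + (k − 1)·(D − 1), such that the subgraph of G induced by S' is connected. -/
/-- A walk in `G` whose support lies in `S'` yields reachability in `G.induce S'`. -/
lemma walk_support_reachable {V : Type} (G : SimpleGraph V) (S' : Set V) :
    ∀ {a b : V} (p : G.Walk a b) (hp : ∀ x ∈ p.support, x ∈ S'),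
      (G.induce S').Reachable ⟨a, hp a p.start_mem_support⟩ ⟨b, hp b p.end_mem_support⟩ := by
  intro a b p
  induction p with
  | nil => intro hp; rfl
  | cons h q ih =>
    intro hp
    have h1 : ∀ x ∈ q.support, x ∈ S' := fun x hx => hp x (by simp [hx])
    refine (SimpleGraph.Reachable.trans ?_ (ih h1))
    exact SimpleGraph.Adj.reachable (by simpa using h)

/-- Map reachability in an induced subgraph to a larger induced subgraph. -/
lemma reachable_induce_mono {V : Type} (G : SimpleGraph V) {S S' : Set V} (hss : S ⊆ S')
    {a b : ↥S} (h : (G.induce S).Reachable a b) :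
    (G.induce S').Reachable ⟨a.1, hss a.2⟩ ⟨b.1, hss b.2⟩ := by
  let f : G.induce S →g G.induce S' :=
    { toFun := fun x => ⟨x.1, hss x.2⟩
      map_rel' := fun h => by simpa using h }
  exact h.map f

/-- In a connected graph of diameter at most `D`, any nonempty vertex set `S` whose
induced subgraph has at most `k` connected components can be enlarged, by adding at most
`(k − 1)·(D − 1)` vertices, to a set inducing a connected subgraph. -/
theorem connect_components_by_paths
    (V : Type) [Fintype V] (G : SimpleGraph V) (D k : ℕ)
    (hconn : G.Connected) (hdiam : ∀ u v : V, G.dist u v ≤ D)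
    (S : Set V) (hS : S.Nonempty)
    (hk : Nat.card (G.induce S).ConnectedComponent ≤ k) :
    ∃ S' : Set V, S ⊆ S' ∧ S'.ncard ≤ S.ncard + (k - 1) * (D - 1) ∧
      (G.induce S').Connected := by
  classical
  obtain ⟨s, hs⟩ := hS
  set H := G.induce S with hH
  -- a representative of each component, and a shortest walk to `s`
  let rep : H.ConnectedComponent → V := fun C => (C.out : ↥S).1
  have hrepS : ∀ C, rep C ∈ S := fun C => (C.out : ↥S).2
  let comps : H.ConnectedComponent := H.connectedComponentMk ⟨s, hs⟩
  let w : ∀ C : H.ConnectedComponent, G.Walk (rep C) s := fun C =>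
    (hconn.exists_walk_length_eq_dist (rep C) s).choose
  have hwlen : ∀ C, (w C).length ≤ D := fun C => by
    have := (hconn.exists_walk_length_eq_dist (rep C) s).choose_spec
    rw [this]; exact hdiam _ _
  -- the interiors we add
  let F : H.ConnectedComponent → Finset V := fun C =>
    if C = comps then ∅ else (w C).support.toFinset \ {rep C, s}
  let T : Finset V := Finset.univ.biUnion F
  refine ⟨S ∪ ↑T, Set.subset_union_left, ?_, ?_⟩
  · -- cardinality
    have hrep_ne : ∀ C, C ≠ comps → rep C ≠ s := by
      intro C hC hrs
      apply hC
      have : H.connectedComponentMk C.out = C := C.out_eq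
      rw [← this]
      exact SimpleGraph.ConnectedComponent.sound (by
        have : (C.out : ↥S) = ⟨s, hs⟩ := Subtype.ext hrs
        rw [this])
    have hFcard : ∀ C, C ≠ comps → (F C).card ≤ D - 1 := by
      intro C hC
      have h1 : (w C).support.toFinset.card ≤ D + 1 := by
        calc (w C).support.toFinset.card ≤ (w C).support.length := List.toFinset_card_le _
          _ = (w C).length + 1 := SimpleGraph.Walk.length_support _
          _ ≤ D + 1 := by have := hwlen C; omega
      have hsub : ({rep C, s} : Finset V) ⊆ (w C).support.toFinset := by
        intro x hx
        simp only [Finset.mem_insert, Finset.mem_singleton] at hx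
        rcases hx with rfl | rfl
        · simp [SimpleGraph.Walk.start_mem_support]
        · simp [SimpleGraph.Walk.end_mem_support]
      have hcard2 : ({rep C, s} : Finset V).card = 2 := by
        rw [Finset.card_insert_of_notMem (by simp [hrep_ne C hC]), Finset.card_singleton]
      simp only [F, if_neg hC]
      rw [Finset.card_sdiff_of_subset hsub, hcard2]
      omega
    have hT : T.card ≤ (k - 1) * (D - 1) := by
      have h1 : T.card ≤ ∑ C, (F C).card := Finset.card_biUnion_le
      have h0 : (F comps).card = 0 := by simp [F]
      have h2 : ∑ C, (F C).card = ∑ C ∈ Finset.univ.erase comps, (F C).card :=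
        (Finset.sum_erase (s := Finset.univ) (f := fun C => (F C).card) h0).symm
      have h3 : ∑ C ∈ Finset.univ.erase comps, (F C).card ≤
          (Finset.univ.erase comps).card * (D - 1) := by
        apply Finset.sum_le_card_nsmul
        intro C hC
        exact hFcard C (Finset.ne_of_mem_erase hC)
      have h4 : (Finset.univ.erase comps).card ≤ k - 1 := by
        have : Nat.card H.ConnectedComponent = Fintype.card H.ConnectedComponent :=
          Nat.card_eq_fintype_card
        have hc : Fintype.card H.ConnectedComponent ≤ k := by omega
        have := Finset.card_erase_of_mem (Finset.mem_univ comps)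
        rw [Finset.card_univ] at this
        omega
      calc T.card ≤ ∑ C, (F C).card := h1
        _ ≤ (Finset.univ.erase comps).card * (D - 1) := by rw [h2]; exact h3
        _ ≤ (k - 1) * (D - 1) := Nat.mul_le_mul_right _ h4
    calc (S ∪ ↑T).ncard ≤ S.ncard + (↑T : Set V).ncard := Set.ncard_union_le _ _
      _ = S.ncard + T.card := by rw [Set.ncard_coe_finset]
      _ ≤ S.ncard + (k - 1) * (D - 1) := by omega
  · -- connectivity
    set S' : Set V := S ∪ ↑T with hS'
    have hss : S ⊆ S' := Set.subset_union_left
    have hsS' : s ∈ S' := hss hs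
    -- support of w C is in S' when C ≠ comps
    have hsupp : ∀ C, C ≠ comps → ∀ x ∈ (w C).support, x ∈ S' := by
      intro C hC x hx
      by_cases hxe : x = rep C ∨ x = s
      · rcases hxe with rfl | rfl
        · exact hss (hrepS C)
        · exact hsS'
      · push_neg at hxe
        refine Or.inr ?_
        simp only [Finset.coe_biUnion, Set.mem_iUnion, Finset.mem_coe, T]
        refine ⟨C, Finset.mem_univ _, ?_⟩
        simp [F, if_neg hC, hx, hxe.1, hxe.2]
    -- every vertex of S' reaches s
    have key : ∀ v : ↥S', (G.induce S').Reachable v ⟨s, hsS'⟩ := by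
      rintro ⟨v, hv | hv⟩
      · -- v ∈ S
        set C := H.connectedComponentMk ⟨v, hv⟩ with hCdef
        by_cases hC : C = comps
        · -- reachable to s within induce S
          have hreach : H.Reachable ⟨v, hv⟩ ⟨s, hs⟩ :=
            SimpleGraph.ConnectedComponent.exact hC
          exact reachable_induce_mono G hss hreach
        · -- go to rep C, then along the walk
          have hreach1 : H.Reachable ⟨v, hv⟩ C.out := by
            apply SimpleGraph.ConnectedComponent.exact
            exact (Quot.out_eq C).symm
          have step1 : (G.induce S').Reachable ⟨v, hss hv⟩ ⟨rep C, hss (hrepS C)⟩ :=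
            reachable_induce_mono G hss hreach1
          have step2 := walk_support_reachable G S' (w C) (hsupp C hC)
          exact step1.trans step2
      · -- v ∈ T
        have hv' : v ∈ T := hv
        rw [Finset.mem_biUnion] at hv'
        obtain ⟨C, -, hvC⟩ := hv'
        have hC : C ≠ comps := by
          intro h; rw [h] at hvC; simp [F] at hvC
        have hvsupp : v ∈ (w C).support := by
          simp only [F, if_neg hC, Finset.mem_sdiff, List.mem_toFinset] at hvC
          exact hvC.1
        have hq := (w C).dropUntil v hvsupp
        have hqsupp : ∀ x ∈ ((w C).dropUntil v hvsupp).support, x ∈ S' :=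
          fun x hx => hsupp C hC x (SimpleGraph.Walk.support_dropUntil_subset _ _ hx)
        exact walk_support_reachable G S' ((w C).dropUntil v hvsupp) hqsupp
    rw [SimpleGraph.connected_iff]
    refine ⟨fun u v => (key u).trans (key v).symm, ⟨⟨s, hsS'⟩⟩⟩
end
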